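/- Let S_k be the set of finite sets {(a_1,t_1),…,(a_j,t_j)} of pairs of positive integers with the a_i distinct, a_i ≥ 2, and Σ a_i t_i = k. For S ∈ S_k, the number of generalized subdiagonal Dyck paths on a (k − Σt_i)×(k − Σt_i) grid composed of t_i horizontal steps of length a_i − 1 (for each i) and k − Σt_i unit vertical steps, no vertical step above the diagonal, equals k!/((Π_i t_i!)·(k+1 − Σ_i t_i)!). -/

import Mathlib

open Finset

/-- A list of steps (`0` = unit vertical step, `v ≥ 1` = horizontal step of length `v`)
describes a subdiagonal generalized Dyck path: at every vertical step, the path stays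
weakly below the diagonal, i.e. the number of vertical steps so far plus one is at most the
total horizontal length traversed so far. -/
def IsSubdiagonalDyck (L : List ℕ) : Prop :=
  ∀ i, i < L.length → L.getD i 1 = 0 →
    (L.take i).count 0 + 1 ≤ (L.take i).sum


private def mlists (s : Multiset ℕ) : Finset (List ℕ) := (Multiset.lists s).toFinset

private lemma mem_mlists_iff (s : Multiset ℕ) (l : List ℕ) : l ∈ mlists s ↔ s = ⟦l⟧ := by
  rw [mlists, Multiset.mem_toFinset, Multiset.mem_lists_iff]

private lemma mlists_coe (l : List ℕ) : mlists (l : Multiset ℕ) = l.permutations.toFinset := rfl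

private lemma lists_cons_decomp (s : Multiset ℕ) (hs : s ≠ 0) :
    mlists s
      = s.toFinset.biUnion (fun a => (mlists (s.erase a)).image (a :: ·)) := by
  ext l
  simp only [mem_mlists_iff, Finset.mem_biUnion, Finset.mem_image,
    Multiset.mem_toFinset, Multiset.quot_mk_to_coe]
  constructor
  · intro h
    rcases l with _ | ⟨a, l'⟩
    · exact absurd h (by simpa using hs)
    · refine ⟨a, ?_, l', ?_, rfl⟩
      · rw [h]; exact List.mem_cons_self
      · rw [h, ← Multiset.cons_coe, Multiset.erase_cons_head]
  · rintro ⟨a, ha, l', hl', rfl⟩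
    rw [← Multiset.cons_coe, ← hl', Multiset.cons_erase ha]

private lemma prod_count_erase (s : Multiset ℕ) (a : ℕ) (ha : a ∈ s) :
    ∏ x ∈ s.toFinset, (s.count x).factorial
      = s.count a * ∏ x ∈ (s.erase a).toFinset, ((s.erase a).count x).factorial := by
  have hsub : (s.erase a).toFinset ⊆ s.toFinset := by
    intro x hx
    simp only [Multiset.mem_toFinset] at hx ⊢
    exact Multiset.mem_of_mem_erase hx
  have h1 : ∏ x ∈ (s.erase a).toFinset, ((s.erase a).count x).factorial
      = ∏ x ∈ s.toFinset, ((s.erase a).count x).factorial := by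
    refine Finset.prod_subset (f := fun x => ((s.erase a).count x).factorial) hsub ?_
    intro x _ hx
    have : (s.erase a).count x = 0 := by
      by_contra h
      exact hx (Multiset.mem_toFinset.2 (Multiset.count_pos.1 (Nat.pos_of_ne_zero h)))
    simp [this]
  rw [h1]
  have hmem : a ∈ s.toFinset := Multiset.mem_toFinset.2 ha
  rw [← Finset.mul_prod_erase _ _ hmem, ← Finset.mul_prod_erase _ _ hmem, ← mul_assoc]
  congr 1
  · rw [Multiset.count_erase_self]
    have : s.count a ≠ 0 := (Multiset.count_pos.2 ha).ne'
    rcases Nat.exists_eq_succ_of_ne_zero this with ⟨c, hc⟩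
    rw [hc]
    simp [Nat.factorial_succ]
  · refine Finset.prod_congr rfl ?_
    intro x hx
    rw [Multiset.count_erase_of_ne]
    exact fun h => (Finset.mem_erase.1 hx).1 h

private lemma lists_card (s : Multiset ℕ) :
    (mlists s).card * ∏ x ∈ s.toFinset, (s.count x).factorial
      = (Multiset.card s).factorial := by
  induction s using Multiset.strongInductionOn with
  | _ s ih =>
  rcases eq_or_ne s 0 with rfl | hs
  · have h0 : (0 : Multiset ℕ) = (([] : List ℕ) : Multiset ℕ) := rfl
    rw [h0, mlists_coe]
    simp
  · have hdisj : ∀ a ∈ s.toFinset, ∀ b ∈ s.toFinset, a ≠ b →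
        Disjoint ((mlists (s.erase a)).image (a :: ·))
          ((mlists (s.erase b)).image (b :: ·)) := by
      intro a _ b _ hab
      simp only [Finset.disjoint_left, Finset.mem_image]
      rintro l ⟨l₁, _, rfl⟩ ⟨l₂, _, h⟩
      exact hab (List.cons.injEq .. ▸ h).1.symm
    rw [lists_cons_decomp s hs, Finset.card_biUnion hdisj]
    have hcards : ∀ a ∈ s.toFinset,
        ((mlists (s.erase a)).image (a :: ·)).card = (mlists (s.erase a)).card := by
      intro a _
      exact Finset.card_image_of_injective _ (fun x y h => (List.cons.injEq .. ▸ h).2)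
    rw [Finset.sum_congr rfl hcards, Finset.sum_mul]
    have key : ∀ a ∈ s.toFinset,
        (mlists (s.erase a)).card * ∏ x ∈ s.toFinset, (s.count x).factorial
          = s.count a * (Multiset.card s - 1).factorial := by
      intro a ha
      have ha' : a ∈ s := Multiset.mem_toFinset.1 ha
      rw [prod_count_erase s a ha', ← mul_assoc, mul_comm _ (s.count a), mul_assoc,
        ih _ (Multiset.erase_lt.2 ha'), Multiset.card_erase_of_mem ha']
      rfl
    rw [Finset.sum_congr rfl key, ← Finset.sum_mul, Multiset.toFinset_sum_count_eq]
    have hpos : Multiset.card s ≠ 0 := by simpa using hs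
    rcases Nat.exists_eq_succ_of_ne_zero hpos with ⟨n, hn⟩
    rw [hn]
    simp [Nat.factorial_succ]

/-- A list of steps ... -/


private def fval (x : ℕ) : ℤ := if x = 0 then -1 else x

private def vsum (L : List ℕ) : ℤ := (L.map fval).sum

private lemma vsum_nil : vsum [] = 0 := rfl

private lemma vsum_append (a b : List ℕ) : vsum (a ++ b) = vsum a + vsum b := by
  simp [vsum]

private lemma vsum_take_succ (L : List ℕ) (i : ℕ) (h : i < L.length) :
    vsum (L.take (i + 1)) = vsum (L.take i) + fval L[i] := by
  rw [List.take_succ, vsum_append]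
  simp [List.getElem?_eq_getElem h, vsum]

private lemma vsum_eq (l : List ℕ) : vsum l = (l.sum : ℤ) - l.count 0 := by
  induction l with
  | nil => simp [vsum]
  | cons x l ih =>
    rcases eq_or_ne x 0 with rfl | hx
    · simp [vsum, fval, List.count_cons] at ih ⊢
      push_cast
      omega
    · simp [vsum, fval, hx, List.count_cons] at ih ⊢
      push_cast [hx]
      omega

private lemma fval_pos_of_ne (x : ℕ) (hx : x ≠ 0) : 1 ≤ fval x := by
  simp only [fval, if_neg hx]
  exact_mod_cast Nat.one_le_iff_ne_zero.2 hx

/-- `Good w`: every proper prefix has nonnegative `vsum`. -/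
private def Good (w : List ℕ) : Prop := ∀ i < w.length, 0 ≤ vsum (w.take i)

private lemma dyck_iff (L : List ℕ) :
    IsSubdiagonalDyck L ↔ ∀ i ≤ L.length, 0 ≤ vsum (L.take i) := by
  constructor
  · intro hD
    intro i
    induction i with
    | zero => intro _; simp [vsum]
    | succ i ih =>
      intro hi
      have hi' : i < L.length := hi
      rw [vsum_take_succ L i hi']
      rcases eq_or_ne L[i] 0 with h0 | h0
      · have hc := hD i hi' (by rw [List.getD_eq_getElem L 1 hi']; exact h0)
        have h1 : (1 : ℤ) ≤ vsum (L.take i) := by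
          rw [vsum_eq]; omega
        rw [h0]
        have hf : fval 0 = -1 := rfl
        rw [hf]; omega
      · have := ih (le_of_lt hi')
        have := fval_pos_of_ne _ h0
        omega
  · intro h i hi h0
    have h0' : L[i] = 0 := by rwa [List.getD_eq_getElem L 1 hi] at h0
    have h1 := h (i+1) hi
    rw [vsum_take_succ L i hi, h0'] at h1
    have hf : fval 0 = -1 := rfl
    rw [hf] at h1
    have h2 : (1:ℤ) ≤ vsum (L.take i) := by omega
    rw [vsum_eq] at h2
    omega

private lemma rot_take_le (w : List ℕ) (r i : ℕ) (hr : r ≤ w.length)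
    (hi : i ≤ w.length - r) :
    vsum ((w.rotate r).take i) = vsum (w.take (r + i)) - vsum (w.take r) := by
  rw [List.rotate_eq_drop_append_take hr]
  have hlen : (w.drop r).length = w.length - r := List.length_drop
  rw [List.take_append_of_le_length (by omega)]
  have := List.take_add (l := w) (i := r) (j := i)
  have h2 := vsum_append (w.take r) ((w.drop r).take i)
  rw [← this] at h2
  omega

private lemma rot_take_gt (w : List ℕ) (r i : ℕ) (hr : r ≤ w.length)
    (hi : w.length - r ≤ i) (hi2 : i ≤ w.length) :
    vsum ((w.rotate r).take i)
      = vsum w - vsum (w.take r) + vsum (w.take (i - (w.length - r))) := by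
  rw [List.rotate_eq_drop_append_take hr]
  have hlen : (w.drop r).length = w.length - r := List.length_drop
  rw [List.take_append, List.take_of_length_le (by omega), hlen, List.take_take,
    min_eq_left (by omega), vsum_append]
  have h2 := vsum_append (w.take r) (w.drop r)
  rw [List.take_append_drop] at h2
  omega

private lemma good_rotate_bounds (w : List ℕ) (hw : vsum w = -1) (r : ℕ) (hr : r < w.length)
    (hg : Good (w.rotate r)) :
    (∀ j < w.length, vsum (w.take r) ≤ vsum (w.take j)) ∧
    (∀ j < r, vsum (w.take r) < vsum (w.take j)) := by
  have hlen : (w.rotate r).length = w.length := List.length_rotate w r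
  have hb : ∀ j < r, vsum (w.take r) < vsum (w.take j) := by
    intro j hj
    have hi2 : w.length - r + j < w.length := by omega
    have := hg (w.length - r + j) (by rw [hlen]; omega)
    rw [rot_take_gt w r _ (le_of_lt hr) (by omega) (by omega)] at this
    have hjj : w.length - r + j - (w.length - r) = j := by omega
    rw [hjj, hw] at this
    omega
  refine ⟨?_, hb⟩
  intro j hj
  rcases lt_or_ge j r with h | h
  · exact le_of_lt (hb j h)
  · have := hg (j - r) (by omega)
    rw [rot_take_le w r (j - r) (le_of_lt hr) (by omega)] at this
    have hrj : r + (j - r) = j := by omega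
    rw [hrj] at this
    omega

private lemma cycle_unique (w : List ℕ) (hw : vsum w = -1) (r₁ r₂ : ℕ)
    (h₁ : r₁ < w.length) (h₂ : r₂ < w.length)
    (hg₁ : Good (w.rotate r₁)) (hg₂ : Good (w.rotate r₂)) : r₁ = r₂ := by
  rcases lt_trichotomy r₁ r₂ with h | h | h
  · have ha := (good_rotate_bounds w hw r₁ h₁ hg₁).1 r₂ h₂
    have hb := (good_rotate_bounds w hw r₂ h₂ hg₂).2 r₁ h
    omega
  · exact h
  · have ha := (good_rotate_bounds w hw r₂ h₂ hg₂).1 r₁ h₁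
    have hb := (good_rotate_bounds w hw r₁ h₁ hg₁).2 r₂ h
    omega

private lemma cycle_exists (w : List ℕ) (hw : vsum w = -1) (hn : w.length ≠ 0) :
    ∃ r < w.length, Good (w.rotate r) := by
  set n := w.length with hnn
  have hne : ((Finset.range n).image (fun j => vsum (w.take j))).Nonempty := by
    refine ⟨vsum (w.take 0), Finset.mem_image.2 ⟨0, Finset.mem_range.2 (by omega), rfl⟩⟩
  set μ := ((Finset.range n).image (fun j => vsum (w.take j))).min' hne with hμ
  have hμmem := Finset.min'_mem _ hne
  rw [← hμ] at hμmem
  rw [Finset.mem_image] at hμmem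
  have hex : ∃ r, r < n ∧ vsum (w.take r) = μ := by
    obtain ⟨j, hj, hje⟩ := hμmem
    exact ⟨j, Finset.mem_range.1 hj, hje⟩
  have hμle : ∀ j < n, μ ≤ vsum (w.take j) := by
    intro j hj
    exact Finset.min'_le _ _ (Finset.mem_image.2 ⟨j, Finset.mem_range.2 hj, rfl⟩)
  classical
  set r := Nat.find hex with hrdef
  obtain ⟨hrn, hre⟩ := Nat.find_spec hex
  have hmin : ∀ j < r, vsum (w.take j) ≠ μ := by
    intro j hj
    have := Nat.find_min hex hj
    intro hc
    exact this ⟨by omega, hc⟩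
  refine ⟨r, by omega, ?_⟩
  intro i hi
  rw [List.length_rotate] at hi
  rcases le_or_gt i (n - r) with hcase | hcase
  · rw [rot_take_le w r i (by omega) hcase, hre]
    rcases eq_or_lt_of_le (show r + i ≤ n by omega) with he | hlt
    · -- r + i = n ; then r ≥ 1 since i < n
      have hr1 : 1 ≤ r := by omega
      have h0 : vsum (w.take 0) = 0 := by simp [vsum]
      have := hμle 0 (by omega)
      have := hmin 0 hr1
      have hμneg : μ ≤ -1 := by omega
      have htake : w.take (r + i) = w := by
        rw [he, hnn]; exact List.take_of_length_le (le_refl _)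
      rw [htake, hw]
      omega
    · have := hμle (r + i) hlt
      omega
  · rw [rot_take_gt w r i (by omega) (by omega) (by omega), hre, hw, ← hnn]
    have hj1 : i - (n - r) < r := by omega
    have := hμle (i - (n - r)) (by omega)
    have := hmin (i - (n - r)) hj1
    omega



private lemma vsum_of_mem_lists {s : Multiset ℕ} {l : List ℕ} (h : l ∈ mlists s) :
    vsum l = (s.map fval).sum := by
  rw [mem_mlists_iff] at h
  subst h
  simp [vsum]

private lemma rotate_cancel (w : List ℕ) (r : ℕ) (hr : r < w.length) :
    (w.rotate r).rotate ((w.length - r) % w.length) = w := by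
  rcases Nat.eq_zero_or_pos r with rfl | hpos
  · simp [List.rotate_zero, Nat.mod_self]
  · rw [List.rotate_rotate, Nat.mod_eq_of_lt (by omega)]
    have : r + (w.length - r) = w.length := by omega
    rw [this, List.rotate_length]


private noncomputable def goodRot (w : List ℕ) : ℕ :=
  if h : vsum w = -1 ∧ w.length ≠ 0 then Classical.choose (cycle_exists w h.1 h.2) else 0

private lemma goodRot_spec (w : List ℕ) (hw : vsum w = -1) (hn : w.length ≠ 0) :
    goodRot w < w.length ∧ Good (w.rotate (goodRot w)) := by
  rw [goodRot, dif_pos ⟨hw, hn⟩]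
  obtain ⟨h1, h2⟩ := Classical.choose_spec (cycle_exists w hw hn)
  exact ⟨h1, h2⟩

open Finset in
private lemma card_lists_cycle (s : Multiset ℕ) (hs : (s.map fval).sum = -1)
    (hn : Multiset.card s ≠ 0) [DecidablePred Good] :
    (mlists s).card
      = Multiset.card s * ((mlists s).filter Good).card := by
  classical
  have hlen : ∀ l ∈ mlists s, l.length = Multiset.card s := by
    intro l hl
    rw [mem_mlists_iff] at hl
    subst hl
    rfl
  have hvs : ∀ l ∈ mlists s, vsum l = -1 := by
    intro l hl; rw [vsum_of_mem_lists hl]; exact hs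
  have hln : ∀ l ∈ mlists s, l.length ≠ 0 := by
    intro l hl; rw [hlen l hl]; exact hn
  have hrotmem : ∀ l ∈ mlists s, ∀ r, l.rotate r ∈ mlists s := by
    intro l hl r
    rw [mem_mlists_iff] at hl ⊢
    subst hl
    exact Quotient.sound (l.rotate_perm r).symm
  have key : (((mlists s).filter Good) ×ˢ range (Multiset.card s)).card
      = (mlists s).card := by
    refine Finset.card_bij' (fun p _ => p.1.rotate p.2)
      (fun w _ => (w.rotate (goodRot w), (w.length - goodRot w) % w.length))
      ?_ ?_ ?_ ?_
    · rintro ⟨g, r⟩ hp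
      simp only [Finset.mem_product, Finset.mem_filter, Finset.mem_range] at hp
      exact hrotmem g hp.1.1 r
    · intro w hw
      obtain ⟨hr, hg⟩ := goodRot_spec w (hvs w hw) (hln w hw)
      simp only [Finset.mem_product, Finset.mem_filter, Finset.mem_range]
      refine ⟨⟨hrotmem w hw _, hg⟩, ?_⟩
      rw [← hlen w hw]
      exact Nat.mod_lt _ (by have := hlen w hw; omega)
    · rintro ⟨g, r⟩ hp
      simp only [Finset.mem_product, Finset.mem_filter, Finset.mem_range] at hp
      obtain ⟨⟨hgs, hgood⟩, hr⟩ := hp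
      have hglen : g.length = Multiset.card s := hlen g hgs
      have hw : g.rotate r ∈ mlists s := hrotmem g hgs r
      obtain ⟨hr', hg'⟩ := goodRot_spec (g.rotate r) (hvs _ hw) (hln _ hw)
      have hcand : ((g.length - r) % g.length) < (g.rotate r).length := by
        rw [List.length_rotate]
        exact Nat.mod_lt _ (by omega)
      have hcgood : Good ((g.rotate r).rotate ((g.length - r) % g.length)) := by
        rw [rotate_cancel g r (by omega)]
        exact hgood
      have huniq := cycle_unique (g.rotate r) (hvs _ hw) (goodRot (g.rotate r))
        ((g.length - r) % g.length) hr' hcand hg' hcgood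
      have hlenrot : (g.rotate r).length = g.length := List.length_rotate g r
      have h1 : (g.rotate r).rotate (goodRot (g.rotate r)) = g := by
        rw [huniq, rotate_cancel g r (by omega)]
      have h2 : ((g.rotate r).length - goodRot (g.rotate r)) % (g.rotate r).length = r := by
        rw [huniq, hlenrot]
        rcases Nat.eq_zero_or_pos r with rfl | hpos
        · simp [Nat.mod_self]
        · rw [Nat.mod_eq_of_lt (show g.length - r < g.length by omega)]
          have h3 : g.length - (g.length - r) = r := by omega
          rw [h3, Nat.mod_eq_of_lt (by omega)]
      simp only [h1, h2]
    · intro w hw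
      obtain ⟨hr, _⟩ := goodRot_spec w (hvs w hw) (hln w hw)
      exact rotate_cancel w (goodRot w) hr
  rw [← key, Finset.card_product, Finset.card_range, mul_comm]





private lemma take_append_zero (L : List ℕ) (i : ℕ) (hi : i ≤ L.length) :
    (L ++ [0]).take i = L.take i := by
  rw [List.take_append]
  have : i - L.length = 0 := by omega
  rw [this]
  simp

private lemma good_append_iff (L : List ℕ) :
    Good (L ++ [0]) ↔ ∀ i ≤ L.length, 0 ≤ vsum (L.take i) := by
  constructor
  · intro h i hi
    have := h i (by simp; omega)
    rwa [take_append_zero L i hi] at this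
  · intro h i hi
    simp only [List.length_append, List.length_singleton] at hi
    rw [take_append_zero L i (by omega)]
    exact h i (by omega)


private lemma good_struct (s₀ : Multiset ℕ) (hs : (s₀.map fval).sum = 0)
    (g : List ℕ) (hg1 : (g : Multiset ℕ) = s₀ + {0}) (hg2 : Good g) :
    g.dropLast ++ [0] = g ∧ (g.dropLast : Multiset ℕ) = s₀ ∧ IsSubdiagonalDyck g.dropLast := by
  have hglen : g.length = Multiset.card s₀ + 1 := by
    have h1 : Multiset.card (g : Multiset ℕ) = Multiset.card (s₀ + {0}) := by rw [hg1]
    simpa using h1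
  have hgne : g ≠ [] := by
    intro h; rw [h] at hglen; simp at hglen
  have hvg : vsum g = -1 := by
    have hm : g ∈ mlists ((s₀ + {0}) : Multiset ℕ) :=
      (mem_mlists_iff _ _).2 hg1.symm
    rw [vsum_of_mem_lists hm]
    have : fval 0 = -1 := rfl
    simp [hs, this]
  have hdle : g.dropLast = g.take (g.length - 1) := List.dropLast_eq_take
  have hpre : 0 ≤ vsum g.dropLast := by
    rw [hdle]
    exact hg2 (g.length - 1) (by omega)
  have hsplit : g.dropLast ++ [g.getLast hgne] = g := List.dropLast_append_getLast hgne
  have hvs : vsum g.dropLast + fval (g.getLast hgne) = -1 := by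
    have := vsum_append g.dropLast [g.getLast hgne]
    rw [hsplit] at this
    have h1 : vsum [g.getLast hgne] = fval (g.getLast hgne) := by simp [vsum]
    rw [h1] at this
    omega
  have hlast : g.getLast hgne = 0 := by
    by_contra hne
    have := fval_pos_of_ne _ hne
    omega
  rw [hlast] at hsplit
  refine ⟨hsplit, ?_, ?_⟩
  · have : ((g.dropLast ++ [0] : List ℕ) : Multiset ℕ) = s₀ + {0} := by rw [hsplit, hg1]
    rw [← Multiset.coe_add, Multiset.coe_singleton] at this
    exact add_right_cancel this
  · rw [dyck_iff]
    intro i hi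
    have hdll : g.dropLast.length = g.length - 1 := List.length_dropLast
    have htt : g.dropLast.take i = g.take i := by
      rw [hdle, List.take_take, min_eq_left (by omega)]
    rw [htt]
    exact hg2 i (by omega)

open Finset in
private lemma card_dyck_eq_good (s₀ : Multiset ℕ) (hs : (s₀.map fval).sum = 0)
    [DecidablePred IsSubdiagonalDyck] [DecidablePred Good] :
    ((mlists s₀).filter IsSubdiagonalDyck).card
      = ((mlists (s₀ + {0})).filter Good).card := by
  classical
  refine Finset.card_bij' (fun L _ => L ++ [0]) (fun g _ => g.dropLast) ?_ ?_ ?_ ?_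
  · intro L hL
    simp only [Finset.mem_filter, mem_mlists_iff] at hL ⊢
    obtain ⟨hL1, hL2⟩ := hL
    constructor
    · rw [hL1]
      show (L : Multiset ℕ) + {0} = ((L ++ [0] : List ℕ) : Multiset ℕ)
      rw [← Multiset.coe_add, Multiset.coe_singleton]
    · rw [good_append_iff]
      exact (dyck_iff L).1 hL2
  · intro g hg
    simp only [Finset.mem_filter, mem_mlists_iff] at hg ⊢
    obtain ⟨hg1, hg2⟩ := hg
    obtain ⟨h1, h2, h3⟩ := good_struct s₀ hs g hg1.symm hg2
    exact ⟨h2.symm, h3⟩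
  · intro L _
    exact List.dropLast_concat
  · intro g hg
    simp only [Finset.mem_filter, mem_mlists_iff] at hg
    obtain ⟨hg1, hg2⟩ := hg
    exact (good_struct s₀ hs g hg1.symm hg2).1

private instance : DecidablePred IsSubdiagonalDyck := fun L => by
  unfold IsSubdiagonalDyck; infer_instance

private instance : DecidablePred Good := fun w => by
  unfold Good; infer_instance

theorem generalized_dyck_path_count (k : ℕ) (S : Finset (ℕ × ℕ))
    (hS : ∀ p ∈ S, 2 ≤ p.1 ∧ 1 ≤ p.2)
    (hdist : ∀ p ∈ S, ∀ q ∈ S, p.1 = q.1 → p = q)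
    (hsum : ∑ p ∈ S, p.1 * p.2 = k) :
    {L : List ℕ |
        (L : Multiset ℕ) =
          (S.val.bind fun p => Multiset.replicate p.2 (p.1 - 1)) +
            Multiset.replicate (k - ∑ p ∈ S, p.2) 0 ∧
        IsSubdiagonalDyck L}.ncard =
      Nat.factorial k /
        ((∏ p ∈ S, Nat.factorial p.2) * Nat.factorial (k + 1 - ∑ p ∈ S, p.2)) := by
  set T := ∑ p ∈ S, p.2 with hT
  have hTk : T ≤ k := by
    rw [hT, ← hsum]
    refine Finset.sum_le_sum ?_
    intro p hp
    have := (hS p hp).1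
    exact Nat.le_mul_of_pos_left _ (by omega)
  set m := k - T with hm
  set B := S.val.bind (fun p => Multiset.replicate p.2 (p.1 - 1)) with hB
  set s₀ := B + Multiset.replicate m 0 with hs₀
  set s := s₀ + ({0} : Multiset ℕ) with hsdef
  -- msum of B
  have hmsumB : (B.map fval).sum = (k : ℤ) - T := by
    rw [hB, Multiset.map_bind, Multiset.sum_bind]
    have hcongr : ∀ p ∈ S, (Multiset.map fval (Multiset.replicate p.2 (p.1 - 1))).sum
        = (p.2 : ℤ) * (p.1 : ℤ) - p.2 := by
      intro p hp
      rw [Multiset.map_replicate, Multiset.sum_replicate]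
      have h2 := (hS p hp).1
      have hne : p.1 - 1 ≠ 0 := by omega
      rw [show fval (p.1 - 1) = ((p.1 - 1 : ℕ) : ℤ) by simp [fval, hne]]
      rw [nsmul_eq_mul]
      rw [Nat.cast_sub (by omega : 1 ≤ p.1)]
      ring
    rw [Finset.sum_map_val, Finset.sum_congr rfl hcongr, Finset.sum_sub_distrib]
    have h1 : ∑ p ∈ S, (p.2 : ℤ) * (p.1 : ℤ) = ((∑ p ∈ S, p.1 * p.2 : ℕ) : ℤ) := by
      push_cast; exact Finset.sum_congr rfl (fun p _ => by ring)
    have h2 : ∑ p ∈ S, (p.2 : ℤ) = ((T : ℕ) : ℤ) := by rw [hT]; push_cast; rfl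
    rw [h1, h2, hsum]
  have hmsum0 : (s₀.map fval).sum = 0 := by
    rw [hs₀, Multiset.map_add, Multiset.sum_add, hmsumB, Multiset.map_replicate,
      Multiset.sum_replicate, show fval 0 = -1 from rfl, nsmul_eq_mul, hm]
    push_cast [Nat.cast_sub hTk]
    ring
  have hmsums : (s.map fval).sum = -1 := by
    rw [hsdef, Multiset.map_add, Multiset.sum_add, hmsum0]
    rfl
  -- cardinalities
  have hcardB : Multiset.card B = T := by
    rw [hB, Multiset.card_bind]
    have : ∀ p ∈ S, (Multiset.card ∘ fun q : ℕ × ℕ => Multiset.replicate q.2 (q.1 - 1)) p = p.2 := by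
      intro p _; simp
    rw [Finset.sum_map_val, Finset.sum_congr rfl this, hT]
  have hcards₀ : Multiset.card s₀ = k := by
    rw [hs₀]
    simp [hcardB]
    omega
  have hcards : Multiset.card s = k + 1 := by
    rw [hsdef]
    simp [hcards₀]
  -- count structure
  have hcount0B : B.count 0 = 0 := by
    rw [hB, Multiset.count_bind]
    refine Multiset.sum_eq_zero ?_
    intro x hx
    rw [Multiset.mem_map] at hx
    obtain ⟨p, hp, rfl⟩ := hx
    have hp' : p ∈ S := hp
    have h2 := (hS p hp').1
    rw [Multiset.count_replicate, if_neg (by omega)]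
  have hcount0s : s.count 0 = m + 1 := by
    rw [hsdef, hs₀, Multiset.count_add, Multiset.count_add, hcount0B,
      Multiset.count_replicate, if_pos rfl, Multiset.count_singleton, if_pos rfl]
    omega
  have hcountxs : ∀ x, x ≠ 0 → s.count x = B.count x := by
    intro x hx
    rw [hsdef, hs₀, Multiset.count_add, Multiset.count_add,
      Multiset.count_replicate, if_neg (fun h => hx h.symm),
      Multiset.count_singleton, if_neg hx]
    omega
  have h0B : (0 : ℕ) ∉ B.toFinset := by
    rw [Multiset.mem_toFinset]
    intro h
    have := Multiset.count_pos.2 h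
    omega
  have htoF : s.toFinset = insert 0 B.toFinset := by
    ext x
    rcases eq_or_ne x 0 with rfl | hx
    · simp only [Multiset.mem_toFinset, Finset.mem_insert, true_or, iff_true]
      rw [← Multiset.count_pos, hcount0s]
      omega
    · simp only [Multiset.mem_toFinset, Finset.mem_insert, hx, false_or]
      rw [← Multiset.count_pos, ← Multiset.count_pos, hcountxs x hx]
  have hBtoF : B.toFinset = S.image (fun p => p.1 - 1) := by
    ext x
    simp only [Multiset.mem_toFinset, hB, Multiset.mem_bind, Multiset.mem_replicate,
      Finset.mem_image]
    constructor
    · rintro ⟨p, hp, _, rfl⟩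
      exact ⟨p, hp, rfl⟩
    · rintro ⟨p, hp, rfl⟩
      have := (hS p hp).2
      exact ⟨p, hp, by omega, rfl⟩
  have hBcount : ∀ p ∈ S, B.count (p.1 - 1) = p.2 := by
    intro p hp
    rw [hB, Multiset.count_bind, Finset.sum_map_val]
    rw [Finset.sum_eq_single_of_mem p hp]
    · rw [Multiset.count_replicate, if_pos rfl]
    · intro q hq hqp
      rw [Multiset.count_replicate, if_neg]
      intro h
      have h2p := (hS p hp).1
      have h2q := (hS q hq).1
      have : q.1 = p.1 := by omega
      exact hqp (hdist q hq p hp this)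
  have hprod : ∏ x ∈ s.toFinset, (s.count x).factorial
      = (m + 1).factorial * ∏ p ∈ S, (p.2).factorial := by
    rw [htoF, Finset.prod_insert h0B, hcount0s]
    congr 1
    have hstep : ∀ x ∈ B.toFinset, (s.count x).factorial = (B.count x).factorial := by
      intro x hx
      have hxne : x ≠ 0 := fun h => h0B (h ▸ hx)
      rw [hcountxs x hxne]
    rw [Finset.prod_congr rfl hstep, hBtoF,
      Finset.prod_image (f := fun x => (B.count x).factorial)]
    · refine Finset.prod_congr rfl ?_
      intro p hp
      rw [hBcount p hp]
    · intro p hp q hq h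
      have h2p := (hS p hp).1
      have h2q := (hS q hq).1
      exact hdist p hp q hq (by beta_reduce at h; omega)
  -- the main counts
  have hA := lists_card s
  have hcyc := card_lists_cycle s hmsums (by rw [hcards]; omega)
  have hdg := card_dyck_eq_good s₀ hmsum0
  rw [hcards, hprod] at hA
  rw [hcards] at hcyc
  rw [hcyc, ← hdg] at hA
  set ND := ((mlists s₀).filter IsSubdiagonalDyck).card with hND
  have hkey : ND * ((∏ p ∈ S, (p.2).factorial) * (m + 1).factorial) = k.factorial := by
    have h1 : (k + 1) * (ND * ((∏ p ∈ S, (p.2).factorial) * (m + 1).factorial))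
        = (k + 1) * k.factorial := by
      rw [← Nat.factorial_succ, ← hA]
      ring
    exact Nat.eq_of_mul_eq_mul_left (by omega) h1
  have hset : {L : List ℕ | (L : Multiset ℕ) = s₀ ∧ IsSubdiagonalDyck L}
      = ↑((mlists s₀).filter IsSubdiagonalDyck) := by
    ext L
    simp only [Set.mem_setOf_eq, Finset.coe_filter, mem_mlists_iff,
      Multiset.quot_mk_to_coe]
    exact ⟨fun ⟨h1, h2⟩ => ⟨h1.symm, h2⟩, fun ⟨h1, h2⟩ => ⟨h1.symm, h2⟩⟩
  rw [hset, Set.ncard_coe_finset, ← hND]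
  have hm1 : k + 1 - T = m + 1 := by omega
  rw [hm1, ← hkey, Nat.mul_div_cancel]
  positivity
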